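/- For all positive integers n and q and any set S of positive integers, the congruence (2^q - 1) F_{n,S} ≡ sum_{l=1}^{q-1} 2^{q-l-1} (sum_{i=0}^n {n brace i}_S (l)_i) (mod q) holds. -/
import Mathlib


open scoped Classical

/-- The `S`-restricted Stirling number of the second kind: the number of partitions of
`[n]` into exactly `k` nonempty blocks, all of whose sizes lie in `S`. -/
noncomputable def sStirling (S : Set ℕ) (n k : ℕ) : ℕ :=
  Nat.card {P : Finpartition (Finset.univ : Finset (Fin n)) //
    P.parts.card = k ∧ ∀ b ∈ P.parts, b.card ∈ S}

/-- The formal power series `E_S(x) = ∑_{s ∈ S} x^s / s!`. -/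
noncomputable def ES (S : Set ℕ) : PowerSeries ℚ :=
  PowerSeries.mk fun n => if n ∈ S then ((n.factorial : ℚ))⁻¹ else 0

/-- The `S`-restricted Fubini number: the number of ordered set partitions of `[n]`
with all block sizes in `S`. -/
noncomputable def sFubini (S : Set ℕ) (n : ℕ) : ℕ :=
  ∑ k ∈ Finset.range (n + 1), k.factorial * sStirling S n k


lemma desc_succ_add (m j : ℕ) :
    (m+1).descFactorial (j+1) = m.descFactorial (j+1) + (j+1) * m.descFactorial j := by
  rw [Nat.succ_descFactorial_succ, Nat.descFactorial_succ]
  rcases le_or_gt j m with h | h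
  · have : m + 1 = (m - j) + (j + 1) := by omega
    rw [this, add_mul]
  · rw [Nat.descFactorial_eq_zero_iff_lt.mpr h]; ring

lemma claimA (i m : ℕ) :
    (∑ l ∈ Finset.range m, 2 ^ (m - l - 1) * l.descFactorial i)
      + ∑ j ∈ Finset.range (i+1), i.descFactorial (i - j) * m.descFactorial j
      = i.factorial * 2 ^ m := by
  induction m with
  | zero =>
    simp only [Finset.range_zero, Finset.sum_empty, zero_add, pow_zero, mul_one]
    rw [Finset.sum_range_succ']
    have : ∀ j ∈ Finset.range i, i.descFactorial (i - (j+1)) * (0:ℕ).descFactorial (j+1) = 0 := by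
      intro j hj
      simp [Nat.descFactorial_succ]
    rw [Finset.sum_congr rfl this]
    simp [Nat.descFactorial_self]
  | succ m ih =>
    have hA : (∑ l ∈ Finset.range (m+1), 2 ^ (m + 1 - l - 1) * l.descFactorial i)
        = 2 * (∑ l ∈ Finset.range m, 2 ^ (m - l - 1) * l.descFactorial i) + m.descFactorial i := by
      rw [Finset.sum_range_succ, Finset.mul_sum]
      congr 1
      · apply Finset.sum_congr rfl
        intro l hl
        have hl' : l < m := Finset.mem_range.mp hl
        have : m + 1 - l - 1 = (m - l - 1) + 1 := by omega
        rw [this, pow_succ]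
        ring
      · have : m + 1 - m - 1 = 0 := by omega
        rw [this, pow_zero, one_mul]
    have hB : (∑ j ∈ Finset.range (i+1), i.descFactorial (i - j) * (m+1).descFactorial j)
        = (∑ j ∈ Finset.range (i+1), i.descFactorial (i - j) * m.descFactorial j)
          + ∑ j ∈ Finset.range i, i.descFactorial (i - j) * m.descFactorial j := by
      rw [Finset.sum_range_succ' (fun j => i.descFactorial (i - j) * (m+1).descFactorial j),
          Finset.sum_range_succ' (fun j => i.descFactorial (i - j) * m.descFactorial j)]
      have key : ∀ j ∈ Finset.range i,
          i.descFactorial (i - (j+1)) * (m+1).descFactorial (j+1)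
          = i.descFactorial (i - (j+1)) * m.descFactorial (j+1)
            + i.descFactorial (i - j) * m.descFactorial j := by
        intro j hj
        have hj' : j < i := Finset.mem_range.mp hj
        rw [desc_succ_add, mul_add]
        congr 1
        have h1 : i - j = (i - (j+1)) + 1 := by omega
        rw [h1, Nat.descFactorial_succ]
        have h2 : i - (i - (j+1)) = j + 1 := by omega
        rw [h2]
        ring
      rw [Finset.sum_congr rfl key, Finset.sum_add_distrib]
      simp only [Nat.descFactorial_zero, mul_one]
      ring
    rw [hA, hB]
    have hlast : (∑ j ∈ Finset.range (i+1), i.descFactorial (i - j) * m.descFactorial j)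
        = (∑ j ∈ Finset.range i, i.descFactorial (i - j) * m.descFactorial j) + m.descFactorial i := by
      rw [Finset.sum_range_succ]
      simp [Nat.descFactorial_self]
    rw [hlast] at ih ⊢
    rw [pow_succ, ← mul_assoc]
    set X := i.factorial * 2 ^ m
    set A := ∑ l ∈ Finset.range m, 2 ^ (m - l - 1) * l.descFactorial i
    set B := ∑ j ∈ Finset.range i, i.descFactorial (i - j) * m.descFactorial j
    omega

lemma desc_q_zero (q j : ℕ) (hj : 1 ≤ j) : ((q.descFactorial j : ZMod q)) = 0 := by
  induction j with
  | zero => omega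
  | succ j ih =>
    rcases Nat.eq_zero_or_pos j with h | h
    · subst h; simp [Nat.descFactorial]
    · rw [Nat.descFactorial_succ]
      push_cast
      rw [ih h, mul_zero]

lemma sStirling_zero (S : Set ℕ) (n : ℕ) (hn : 0 < n) : sStirling S n 0 = 0 := by
  have : IsEmpty {P : Finpartition (Finset.univ : Finset (Fin n)) //
      P.parts.card = 0 ∧ ∀ b ∈ P.parts, b.card ∈ S} := by
    constructor
    rintro ⟨P, h0, -⟩
    have he : P.parts = ∅ := Finset.card_eq_zero.mp h0
    have := Finpartition.parts_eq_empty_iff.mp he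
    have : (Finset.univ : Finset (Fin n)).Nonempty :=
      ⟨⟨0, hn⟩, Finset.mem_univ _⟩
    simp_all
  exact Nat.card_of_isEmpty

lemma key_mod (q i : ℕ) (hq : 0 < q) (hi : 1 ≤ i) :
    (∑ l ∈ Finset.Ico 1 q, (2:ZMod q) ^ (q - l - 1) * (l.descFactorial i : ZMod q))
      = ((2:ZMod q) ^ q - 1) * (i.factorial : ZMod q) := by
  have hc := congrArg (fun x : ℕ => (x : ZMod q)) (claimA i q)
  push_cast at hc
  have hB : (∑ j ∈ Finset.range (i+1),
      (i.descFactorial (i - j) : ZMod q) * (q.descFactorial j : ZMod q)) = (i.factorial : ZMod q) := by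
    rw [Finset.sum_range_succ']
    have : ∀ j ∈ Finset.range i,
        (i.descFactorial (i - (j+1)) : ZMod q) * (q.descFactorial (j+1) : ZMod q) = 0 := by
      intro j _
      rw [desc_q_zero q (j+1) (by omega), mul_zero]
    rw [Finset.sum_congr rfl this]
    simp [Nat.descFactorial_self]
  rw [hB] at hc
  have hA : (∑ l ∈ Finset.range q, (2:ZMod q) ^ (q - l - 1) * (l.descFactorial i : ZMod q))
      = ∑ l ∈ Finset.Ico 1 q, (2:ZMod q) ^ (q - l - 1) * (l.descFactorial i : ZMod q) := by
    rw [Finset.range_eq_Ico, Finset.sum_eq_sum_Ico_succ_bot hq]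
    obtain ⟨i', rfl⟩ := Nat.exists_eq_add_of_le hi
    rw [Nat.descFactorial_eq_zero_iff_lt.mpr (show 0 < 1 + i' by omega)]
    push_cast
    ring
  rw [hA] at hc
  linear_combination hc

/-- the congruence
`(2^q - 1) F_{n,S} ≡ ∑_{l=1}^{q-1} 2^{q-l-1} (∑_{i=0}^n {n brace i}_S (l)_i) (mod q)`. -/
theorem sFubini_congruence (S : Set ℕ) (hS : 0 ∉ S) (n q : ℕ)
    (hn : 0 < n) (hq : 0 < q) :
    (2 ^ q - 1) * sFubini S n ≡
      (∑ l ∈ Finset.Ico 1 q, 2 ^ (q - l - 1) *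
        ∑ i ∈ Finset.range (n + 1), sStirling S n i * l.descFactorial i) [MOD q] := by
  rw [← ZMod.natCast_eq_natCast_iff]
  simp only [sFubini]
  rw [Nat.cast_mul, Nat.cast_sub (Nat.one_le_two_pow)]
  push_cast
  rw [Finset.mul_sum]
  have hswap : (∑ l ∈ Finset.Ico 1 q, (2:ZMod q) ^ (q - l - 1) *
        ∑ i ∈ Finset.range (n + 1), (sStirling S n i : ZMod q) * (l.descFactorial i : ZMod q))
      = ∑ i ∈ Finset.range (n + 1), (sStirling S n i : ZMod q) *
          ∑ l ∈ Finset.Ico 1 q, (2:ZMod q) ^ (q - l - 1) * (l.descFactorial i : ZMod q) := by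
    simp_rw [Finset.mul_sum]
    rw [Finset.sum_comm]
    apply Finset.sum_congr rfl
    intro i _
    apply Finset.sum_congr rfl
    intro l _
    ring
  rw [hswap]
  apply Finset.sum_congr rfl
  intro i _
  rcases Nat.eq_zero_or_pos i with h0 | h1
  · subst h0
    rw [sStirling_zero S n hn]
    push_cast
    ring
  · rw [key_mod q i hq h1]
    ring
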